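/- arXiv:0803.4206 — 3 statements merged into one kernel-verified Lean document; each statement's English description precedes it below -/
import Mathlib

section
/- Let the row/column index set of all matrices be partitioned into two blocks S ∪ T. For i ∈ {1,2}, let J_i be a symmetric real matrix and B_{i,1},…,B_{i,k_i} be real matrices, all block anti-diagonal with respect to the partition, and let A_{i,1},…,A_{i,m_i} be real matrices that are block diagonal with respect to the partition. Suppose there are entrywise non-negative vectors u_i ∈ ℝ^{k_i} with J_i = Σ_j u_i[j]·B_{i,j} for i ∈ {1,2}, and suppose there are vectors y_i ∈ ℝ^{m_i} and entrywise non-negative vectors z_i ∈ ℝ^{k_i} such that Σ_j y_i[j]·A_{i,j} − (Σ_j z_i[j]·B_{i,j} + J_i) is positive semidefinite for i ∈ {1,2}. Then the vector v ∈ ℝ^{k_1·k_2} defined by v[j,j'] = z_1[j]z_2[j'] + z_1[j]u_2[j'] + u_1[j]z_2[j'] is entrywise non-negative, and the matrix Σ_{j,j'} y_1[j]y_2[j']·(A_{1,j} ⊗ A_{2,j'}) − (Σ_{j,j'} v[j,j']·(B_{1,j} ⊗ B_{2,j'}) + J_1 ⊗ J_2) is positive semidefinite. -/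
open Matrix Kronecker BigOperators

private lemma psd_add {n : Type*} [Fintype n] {M N : Matrix n n ℝ}
    (hM : M.PosSemidef) (hN : N.PosSemidef) : (M + N).PosSemidef := by
  exact hM.add hN

private lemma psd_smul {n : Type*} [Fintype n] {M : Matrix n n ℝ} {c : ℝ}
    (hM : M.PosSemidef) (hc : 0 ≤ c) : (c • M).PosSemidef := by
  exact hM.smul hc

private lemma psd_kron {n : Type*} [Fintype n] [DecidableEq n] {P Q : Matrix n n ℝ}
    (hP : P.PosSemidef) (hQ : Q.PosSemidef) : (P ⊗ₖ Q).PosSemidef := by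
  exact hP.kronecker hQ

private lemma sum_kron {n : Type*} [Fintype n] {κ1 κ2 : ℕ} (c : Fin κ1 → ℝ) (d : Fin κ2 → ℝ)
    (M : Fin κ1 → Matrix n n ℝ) (N : Fin κ2 → Matrix n n ℝ) :
    ∑ j, ∑ j', (c j * d j') • (M j ⊗ₖ N j') = (∑ j, c j • M j) ⊗ₖ (∑ j', d j' • N j') := by
  ext i j
  simp only [Matrix.sum_apply, Matrix.smul_apply, Matrix.kroneckerMap_apply, smul_eq_mul]
  rw [Finset.sum_mul_sum]
  exact Finset.sum_congr rfl fun a _ => Finset.sum_congr rfl fun b _ => by ring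

theorem stmt_0 {n : Type*} [Fintype n] [DecidableEq n]
    (p : n → Bool)
    {k1 k2 m1 m2 : ℕ}
    (J1 J2 : Matrix n n ℝ)
    (B1 : Fin k1 → Matrix n n ℝ) (B2 : Fin k2 → Matrix n n ℝ)
    (A1 : Fin m1 → Matrix n n ℝ) (A2 : Fin m2 → Matrix n n ℝ)
    (hJ1sym : J1.IsSymm) (hJ2sym : J2.IsSymm)
    (hJ1anti : ∀ i j, p i = p j → J1 i j = 0)
    (hJ2anti : ∀ i j, p i = p j → J2 i j = 0)
    (hB1anti : ∀ l i j, p i = p j → B1 l i j = 0)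
    (hB2anti : ∀ l i j, p i = p j → B2 l i j = 0)
    (hA1diag : ∀ l i j, p i ≠ p j → A1 l i j = 0)
    (hA2diag : ∀ l i j, p i ≠ p j → A2 l i j = 0)
    (u1 : Fin k1 → ℝ) (u2 : Fin k2 → ℝ)
    (hu1 : ∀ j, 0 ≤ u1 j) (hu2 : ∀ j, 0 ≤ u2 j)
    (hJ1span : J1 = ∑ j, u1 j • B1 j) (hJ2span : J2 = ∑ j, u2 j • B2 j)
    (y1 : Fin m1 → ℝ) (y2 : Fin m2 → ℝ)
    (z1 : Fin k1 → ℝ) (z2 : Fin k2 → ℝ)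
    (hz1 : ∀ j, 0 ≤ z1 j) (hz2 : ∀ j, 0 ≤ z2 j)
    (h1 : ((∑ j, y1 j • A1 j) - ((∑ j, z1 j • B1 j) + J1)).PosSemidef)
    (h2 : ((∑ j, y2 j • A2 j) - ((∑ j, z2 j • B2 j) + J2)).PosSemidef) :
    (∀ j j', 0 ≤ z1 j * z2 j' + z1 j * u2 j' + u1 j * z2 j') ∧
    ((∑ j, ∑ j', (y1 j * y2 j') • (A1 j ⊗ₖ A2 j')) -
      ((∑ j, ∑ j', (z1 j * z2 j' + z1 j * u2 j' + u1 j * z2 j') • (B1 j ⊗ₖ B2 j')) +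
        J1 ⊗ₖ J2)).PosSemidef := by
  constructor
  · intro j j'
    have := mul_nonneg (hz1 j) (hz2 j')
    have := mul_nonneg (hz1 j) (hu2 j')
    have := mul_nonneg (hu1 j) (hz2 j')
    linarith
  set Y1 := ∑ j, y1 j • A1 j with hY1
  set Y2 := ∑ j, y2 j • A2 j with hY2
  set Z1 := ∑ j, z1 j • B1 j with hZ1
  set Z2 := ∑ j, z2 j • B2 j with hZ2
  have hY1zero : ∀ i j, p i ≠ p j → Y1 i j = 0 := by
    intro i j h
    simp only [hY1, Matrix.sum_apply, Matrix.smul_apply, smul_eq_mul]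
    exact Finset.sum_eq_zero fun l _ => by rw [hA1diag l i j h, mul_zero]
  have hY2zero : ∀ i j, p i ≠ p j → Y2 i j = 0 := by
    intro i j h
    simp only [hY2, Matrix.sum_apply, Matrix.smul_apply, smul_eq_mul]
    exact Finset.sum_eq_zero fun l _ => by rw [hA2diag l i j h, mul_zero]
  have hZ1zero : ∀ i j, p i = p j → Z1 i j = 0 := by
    intro i j h
    simp only [hZ1, Matrix.sum_apply, Matrix.smul_apply, smul_eq_mul]
    exact Finset.sum_eq_zero fun l _ => by rw [hB1anti l i j h, mul_zero]
  have hZ2zero : ∀ i j, p i = p j → Z2 i j = 0 := by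
    intro i j h
    simp only [hZ2, Matrix.sum_apply, Matrix.smul_apply, smul_eq_mul]
    exact Finset.sum_eq_zero fun l _ => by rw [hB2anti l i j h, mul_zero]
  set dd : n → ℝ := fun i => if p i then 1 else -1 with hdd
  set D : Matrix n n ℝ := Matrix.diagonal dd with hD
  have hDH : Dᴴ = D := by
    ext i j
    rcases eq_or_ne i j with rfl | h
    · simp [hD, Matrix.conjTranspose_apply]
    · simp [hD, Matrix.conjTranspose_apply, Matrix.diagonal_apply_ne _ h,
        Matrix.diagonal_apply_ne _ (Ne.symm h)]
  have hconj : ∀ (Y Q : Matrix n n ℝ), (∀ i j, p i ≠ p j → Y i j = 0) →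
      (∀ i j, p i = p j → Q i j = 0) → D * (Y - Q) * D = Y + Q := by
    intro Y Q hY hQ
    ext i j
    rw [hD, Matrix.mul_diagonal, Matrix.diagonal_mul]
    simp only [Matrix.sub_apply, Matrix.add_apply, hdd]
    by_cases h : p i = p j
    · rw [hQ i j h, h]
      cases p j <;> simp <;> ring
    · rw [hY i j h]
      cases hpi : p i <;> cases hpj : p j <;> simp_all <;> ring
  have hQ1zero : ∀ i j, p i = p j → (Z1 + J1) i j = 0 := fun i j h => by
    rw [Matrix.add_apply, hZ1zero i j h, hJ1anti i j h, add_zero]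
  have hQ2zero : ∀ i j, p i = p j → (Z2 + J2) i j = 0 := fun i j h => by
    rw [Matrix.add_apply, hZ2zero i j h, hJ2anti i j h, add_zero]
  have h1' : (Y1 + (Z1 + J1)).PosSemidef := by
    have h := h1.mul_mul_conjTranspose_same D
    rwa [hDH, hconj Y1 (Z1 + J1) hY1zero hQ1zero] at h
  have h2' : (Y2 + (Z2 + J2)).PosSemidef := by
    have h := h2.mul_mul_conjTranspose_same D
    rwa [hDH, hconj Y2 (Z2 + J2) hY2zero hQ2zero] at h
  have e1 : (∑ j, ∑ j', (y1 j * y2 j') • (A1 j ⊗ₖ A2 j')) = Y1 ⊗ₖ Y2 := by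
    rw [hY1, hY2]; exact sum_kron y1 y2 A1 A2
  have e2 : (∑ j, ∑ j', (z1 j * z2 j' + z1 j * u2 j' + u1 j * z2 j') • (B1 j ⊗ₖ B2 j'))
      = Z1 ⊗ₖ Z2 + Z1 ⊗ₖ J2 + J1 ⊗ₖ Z2 := by
    rw [hZ1, hZ2, hJ1span, hJ2span]
    simp only [add_smul, Finset.sum_add_distrib]
    rw [sum_kron z1 z2 B1 B2, sum_kron z1 u2 B1 B2, sum_kron u1 z2 B1 B2]
  have key : Y1 ⊗ₖ Y2 - (Z1 ⊗ₖ Z2 + Z1 ⊗ₖ J2 + J1 ⊗ₖ Z2 + J1 ⊗ₖ J2)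
      = (2⁻¹ : ℝ) • ((Y1 - (Z1 + J1)) ⊗ₖ (Y2 + (Z2 + J2)))
        + (2⁻¹ : ℝ) • ((Y1 + (Z1 + J1)) ⊗ₖ (Y2 - (Z2 + J2))) := by
    ext i j
    simp only [Matrix.sub_apply, Matrix.add_apply, Matrix.smul_apply,
      Matrix.kroneckerMap_apply, smul_eq_mul]
    ring
  rw [e1, e2, key]
  exact psd_add (psd_smul (psd_kron h1 h2') (by norm_num))
    (psd_smul (psd_kron h1' h2) (by norm_num))
end

section
/- Let the row/column index set of all matrices be partitioned into two blocks S ∪ T. For i ∈ {1,2}, let J_i be symmetric and block anti-diagonal, let B_{i,1},…,B_{i,k_i} be block anti-diagonal, let A_{i,1},…,A_{i,m_i} be block diagonal, and let b_i ∈ ℝ^{m_i}. Suppose: (a) there are non-negative vectors u_i with J_i = Σ_j u_i[j]·B_{i,j}; (b) there are vectors y_i ∈ ℝ^{m_i} and non-negative vectors z_i ∈ ℝ^{k_i} with Σ_j y_i[j]·A_{i,j} − (Σ_j z_i[j]·B_{i,j} + J_i) ⪰ 0 and y_iᵀb_i = α_i. Then for every positive semidefinite matrix X satisfying (A_{1,j}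 ⊗ A_{2,j'}) • X = b_1[j]·b_2[j'] for all j,j' and (B_{1,j} ⊗ B_{2,j'}) • X ≥ 0 for all j,j', one has (J_1 ⊗ J_2) • X ≤ α_1 · α_2. (In other words, under bipartiteness and the condition that J_i lies in the positive span of the B_{i,j}, the optimal value of the product semidefinite program is at most the product α_1·α_2 of dual-feasible values of the factors.) -/
open Matrix Kronecker BigOperators

/-- Frobenius inner product of two real matrices. -/
def frob {α β : Type*} [Fintype α] [Fintype β] (A X : Matrix α β ℝ) : ℝ :=
  ∑ i, ∑ j, A i j * X i j

section helpers

variable {α β : Type*} [Fintype α] [Fintype β]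

lemma frob_add (A B X : Matrix α β ℝ) : frob (A + B) X = frob A X + frob B X := by
  simp [frob, Matrix.add_apply, add_mul, Finset.sum_add_distrib]

lemma frob_sub (A B X : Matrix α β ℝ) : frob (A - B) X = frob A X - frob B X := by
  simp [frob, Matrix.sub_apply, sub_mul, Finset.sum_sub_distrib]

lemma frob_smul (c : ℝ) (A X : Matrix α β ℝ) : frob (c • A) X = c * frob A X := by
  simp [frob, Matrix.smul_apply, smul_eq_mul, Finset.mul_sum, mul_assoc]

lemma frob_sum {ι : Type*} (s : Finset ι) (A : ι → Matrix α β ℝ) (X : Matrix α β ℝ) :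
    frob (∑ l ∈ s, A l) X = ∑ l ∈ s, frob (A l) X := by
  induction s using Finset.cons_induction with
  | empty => simp [frob]
  | cons a s ha ih => rw [Finset.sum_cons, Finset.sum_cons, frob_add, ih]

lemma frob_nonneg {A X : Matrix α α ℝ} (hA : A.PosSemidef) (hX : X.PosSemidef) :
    0 ≤ frob A X := by
  obtain ⟨B, rfl⟩ : ∃ B : Matrix α α ℝ, A = Bᴴ * B := by
    classical
    open scoped MatrixOrder in exact CStarAlgebra.nonneg_iff_eq_star_mul_self.mp hA.nonneg
  have h1 : ∀ l, dotProduct (B l) (X *ᵥ B l) = ∑ i, ∑ j, (Bᴴ i l * B l j) * X i j := by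
    intro l
    simp only [dotProduct, mulVec, Finset.mul_sum, conjTranspose_apply, star_trivial]
    exact Finset.sum_congr rfl fun i _ => Finset.sum_congr rfl fun j _ => by ring
  have key : frob (Bᴴ * B) X = ∑ l, dotProduct (B l) (X *ᵥ B l) := by
    calc frob (Bᴴ * B) X = ∑ i, ∑ j, ∑ l, (Bᴴ i l * B l j) * X i j := by
          simp [frob, Matrix.mul_apply, Finset.sum_mul]
      _ = ∑ i, ∑ l, ∑ j, (Bᴴ i l * B l j) * X i j :=
          Finset.sum_congr rfl fun i _ => Finset.sum_comm
      _ = ∑ l, ∑ i, ∑ j, (Bᴴ i l * B l j) * X i j := Finset.sum_comm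
      _ = ∑ l, dotProduct (B l) (X *ᵥ B l) := by simp_rw [h1]
  rw [key]
  refine Finset.sum_nonneg fun l _ => ?_
  simpa using hX.dotProduct_mulVec_nonneg (B l)

lemma kron_conjTranspose (A : Matrix α α ℝ) (B : Matrix β β ℝ) :
    (A ⊗ₖ B)ᴴ = Aᴴ ⊗ₖ Bᴴ := by
  ext a b
  simp [Matrix.conjTranspose_apply, Matrix.kroneckerMap_apply]

lemma posSemidef_kron {A : Matrix α α ℝ} {B : Matrix β β ℝ}
    [DecidableEq α] [DecidableEq β]
    (hA : A.PosSemidef) (hB : B.PosSemidef) : (A ⊗ₖ B).PosSemidef := by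
  obtain ⟨C, rfl⟩ : ∃ C : Matrix α α ℝ, A = Cᴴ * C := by
    open scoped MatrixOrder in exact CStarAlgebra.nonneg_iff_eq_star_mul_self.mp hA.nonneg
  obtain ⟨E, rfl⟩ : ∃ E : Matrix β β ℝ, B = Eᴴ * E := by
    open scoped MatrixOrder in exact CStarAlgebra.nonneg_iff_eq_star_mul_self.mp hB.nonneg
  rw [Matrix.mul_kronecker_mul, ← kron_conjTranspose]
  exact posSemidef_conjTranspose_mul_self _

lemma frob_sum_kron {ι κ : Type*} [Fintype ι] [Fintype κ]
    (c : ι → ℝ) (d : κ → ℝ) (M : ι → Matrix α α ℝ) (N : κ → Matrix β β ℝ)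
    (X : Matrix (α × β) (α × β) ℝ) :
    frob ((∑ i, c i • M i) ⊗ₖ (∑ j, d j • N j)) X
      = ∑ i, ∑ j, c i * d j * frob (M i ⊗ₖ N j) X := by
  have h1 : (∑ i, c i • M i) ⊗ₖ (∑ j, d j • N j)
      = ∑ i, ∑ j, (c i * d j) • (M i ⊗ₖ N j) := by
    ext a b
    simp only [Matrix.kroneckerMap_apply, Matrix.sum_apply, Matrix.smul_apply, smul_eq_mul]
    rw [Finset.sum_mul_sum]
    exact Finset.sum_congr rfl fun i _ => Finset.sum_congr rfl fun j _ => by ring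
  rw [h1, frob_sum]
  refine Finset.sum_congr rfl fun i _ => ?_
  rw [frob_sum]
  exact Finset.sum_congr rfl fun j _ => frob_smul _ _ _

lemma conj_psd {n : Type*} [Fintype n] [DecidableEq n] (p : n → Bool)
    (P Q : Matrix n n ℝ) (hP : ∀ i j, p i ≠ p j → P i j = 0)
    (hQ : ∀ i j, p i = p j → Q i j = 0) (h : (P - Q).PosSemidef) :
    (P + Q).PosSemidef := by
  have hDH : (Matrix.diagonal (fun i => if p i then (-1:ℝ) else 1))ᴴ
      = Matrix.diagonal (fun i => if p i then (-1:ℝ) else 1) := by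
    simp [Matrix.diagonal_conjTranspose]
  have h2 := h.mul_mul_conjTranspose_same
    (Matrix.diagonal (fun i => if p i then (-1:ℝ) else 1))
  rw [hDH] at h2
  have e : Matrix.diagonal (fun i => if p i then (-1:ℝ) else 1) * (P - Q)
      * Matrix.diagonal (fun i => if p i then (-1:ℝ) else 1) = P + Q := by
    ext i j
    rw [Matrix.mul_diagonal, Matrix.diagonal_mul, Matrix.sub_apply, Matrix.add_apply]
    by_cases h' : p i = p j
    · rw [hQ i j h', sub_zero, add_zero, h']
      cases hpj : p j <;> simp [hpj] <;> ring
    · rw [hP i j h', zero_sub, zero_add]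
      cases hpi : p i <;> cases hpj : p j <;>
        first
        | exact absurd (hpi.trans hpj.symm) h'
        | simp [hpi, hpj]
        | (simp [hpi, hpj]; ring)
  rwa [e] at h2

end helpers

theorem stmt_1 {n : Type*} [Fintype n] [DecidableEq n]
    (p : n → Bool)
    {k1 k2 m1 m2 : ℕ}
    (J1 J2 : Matrix n n ℝ)
    (B1 : Fin k1 → Matrix n n ℝ) (B2 : Fin k2 → Matrix n n ℝ)
    (A1 : Fin m1 → Matrix n n ℝ) (A2 : Fin m2 → Matrix n n ℝ)
    (b1 : Fin m1 → ℝ) (b2 : Fin m2 → ℝ)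
    (α1 α2 : ℝ)
    (hJ1sym : J1.IsSymm) (hJ2sym : J2.IsSymm)
    (hJ1anti : ∀ i j, p i = p j → J1 i j = 0)
    (hJ2anti : ∀ i j, p i = p j → J2 i j = 0)
    (hB1anti : ∀ l i j, p i = p j → B1 l i j = 0)
    (hB2anti : ∀ l i j, p i = p j → B2 l i j = 0)
    (hA1diag : ∀ l i j, p i ≠ p j → A1 l i j = 0)
    (hA2diag : ∀ l i j, p i ≠ p j → A2 l i j = 0)
    (u1 : Fin k1 → ℝ) (u2 : Fin k2 → ℝ)
    (hu1 : ∀ j, 0 ≤ u1 j) (hu2 : ∀ j, 0 ≤ u2 j)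
    (hJ1span : J1 = ∑ j, u1 j • B1 j) (hJ2span : J2 = ∑ j, u2 j • B2 j)
    (y1 : Fin m1 → ℝ) (y2 : Fin m2 → ℝ)
    (z1 : Fin k1 → ℝ) (z2 : Fin k2 → ℝ)
    (hz1 : ∀ j, 0 ≤ z1 j) (hz2 : ∀ j, 0 ≤ z2 j)
    (h1 : ((∑ j, y1 j • A1 j) - ((∑ j, z1 j • B1 j) + J1)).PosSemidef)
    (h2 : ((∑ j, y2 j • A2 j) - ((∑ j, z2 j • B2 j) + J2)).PosSemidef)
    (hy1b1 : ∑ j, y1 j * b1 j = α1) (hy2b2 : ∑ j, y2 j * b2 j = α2)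
    (X : Matrix (n × n) (n × n) ℝ)
    (hX : X.PosSemidef)
    (hXA : ∀ j j', frob (A1 j ⊗ₖ A2 j') X = b1 j * b2 j')
    (hXB : ∀ j j', 0 ≤ frob (B1 j ⊗ₖ B2 j') X) :
    frob (J1 ⊗ₖ J2) X ≤ α1 * α2 := by
  classical
  set P1 := ∑ j, y1 j • A1 j with hP1def
  set P2 := ∑ j, y2 j • A2 j with hP2def
  set Q1 := (∑ j, z1 j • B1 j) + J1 with hQ1def
  set Q2 := (∑ j, z2 j • B2 j) + J2 with hQ2def
  have hQ1 : Q1 = ∑ j, (z1 j + u1 j) • B1 j := by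
    rw [hQ1def, hJ1span, ← Finset.sum_add_distrib]
    exact Finset.sum_congr rfl fun j _ => (add_smul _ _ _).symm
  have hQ2 : Q2 = ∑ j, (z2 j + u2 j) • B2 j := by
    rw [hQ2def, hJ2span, ← Finset.sum_add_distrib]
    exact Finset.sum_congr rfl fun j _ => (add_smul _ _ _).symm
  have hP1diag : ∀ i j, p i ≠ p j → P1 i j = 0 := by
    intro i j h
    rw [hP1def]
    simp only [Matrix.sum_apply, Matrix.smul_apply, smul_eq_mul]
    exact Finset.sum_eq_zero fun l _ => by rw [hA1diag l i j h, mul_zero]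
  have hP2diag : ∀ i j, p i ≠ p j → P2 i j = 0 := by
    intro i j h
    rw [hP2def]
    simp only [Matrix.sum_apply, Matrix.smul_apply, smul_eq_mul]
    exact Finset.sum_eq_zero fun l _ => by rw [hA2diag l i j h, mul_zero]
  have hQ1anti : ∀ i j, p i = p j → Q1 i j = 0 := by
    intro i j h
    rw [hQ1]
    simp only [Matrix.sum_apply, Matrix.smul_apply, smul_eq_mul]
    exact Finset.sum_eq_zero fun l _ => by rw [hB1anti l i j h, mul_zero]
  have hQ2anti : ∀ i j, p i = p j → Q2 i j = 0 := by
    intro i j h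
    rw [hQ2]
    simp only [Matrix.sum_apply, Matrix.smul_apply, smul_eq_mul]
    exact Finset.sum_eq_zero fun l _ => by rw [hB2anti l i j h, mul_zero]
  have hpsd1 : ((P1 - Q1) ⊗ₖ (P2 + Q2)).PosSemidef :=
    posSemidef_kron h1 (conj_psd p P2 Q2 hP2diag hQ2anti h2)
  have hpsd2 : ((P1 + Q1) ⊗ₖ (P2 - Q2)).PosSemidef :=
    posSemidef_kron (conj_psd p P1 Q1 hP1diag hQ1anti h1) h2
  have hA' : 0 ≤ frob ((P1 - Q1) ⊗ₖ (P2 + Q2)) X := frob_nonneg hpsd1 hX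
  have hB' : 0 ≤ frob ((P1 + Q1) ⊗ₖ (P2 - Q2)) X := frob_nonneg hpsd2 hX
  have mid : (P1 - Q1) ⊗ₖ (P2 + Q2) + (P1 + Q1) ⊗ₖ (P2 - Q2)
      = (2:ℝ) • (P1 ⊗ₖ P2) - (2:ℝ) • (Q1 ⊗ₖ Q2) := by
    ext a b
    simp only [Matrix.kroneckerMap_apply, Matrix.sub_apply, Matrix.add_apply,
      Matrix.smul_apply, smul_eq_mul]
    ring
  have hexp : frob ((P1 - Q1) ⊗ₖ (P2 + Q2)) X + frob ((P1 + Q1) ⊗ₖ (P2 - Q2)) X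
      = 2 * frob (P1 ⊗ₖ P2) X - 2 * frob (Q1 ⊗ₖ Q2) X := by
    rw [← frob_add, mid, frob_sub, frob_smul, frob_smul]
  have hPP : frob (P1 ⊗ₖ P2) X = α1 * α2 := by
    rw [hP1def, hP2def, frob_sum_kron]
    calc ∑ j, ∑ j', y1 j * y2 j' * frob (A1 j ⊗ₖ A2 j') X
        = ∑ j, ∑ j', (y1 j * b1 j) * (y2 j' * b2 j') := by
          refine Finset.sum_congr rfl fun j _ => Finset.sum_congr rfl fun j' _ => ?_
          rw [hXA j j']; ring
      _ = (∑ j, y1 j * b1 j) * (∑ j', y2 j' * b2 j') := (Finset.sum_mul_sum _ _ _ _).symm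
      _ = α1 * α2 := by rw [hy1b1, hy2b2]
  have hJle : frob (J1 ⊗ₖ J2) X ≤ frob (Q1 ⊗ₖ Q2) X := by
    rw [hJ1span, hJ2span, frob_sum_kron, hQ1, hQ2, frob_sum_kron]
    refine Finset.sum_le_sum fun j _ => Finset.sum_le_sum fun j' _ => ?_
    have hf := hXB j j'
    have hle : u1 j * u2 j' ≤ (z1 j + u1 j) * (z2 j' + u2 j') := by
      nlinarith [hu1 j, hu2 j', hz1 j, hz2 j']
    exact mul_le_mul_of_nonneg_right hle hf
  linarith
end

section
/- (Counterexample, product instance has positive value.) There exists a 4×4 positive semidefinite real matrix X with X[0,0] + X[1,1] + X[2,2] + X[3,3] = 1, X[0,3] ≥ 0, X[1,2] ≥ 0, X[2,1] ≥ 0, X[3,0] ≥ 0, and X[0,3] + X[1,2] + X[2,1] + X[3,0] > 0. (This shows that the product of the zero-value program with objective J having J[0,1] = J[1,0] = −1, constraint I • X = 1, and non-negativity constraints X[0,1] ≥ 0, X[1,0] ≥ 0, has strictly positive value, since J ⊗ J has entries +1 exactly at positions (0,3), (1,2), (2,1), (3,0); hence without the condition that J lies in the positive span of the non-negativity constraint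 matrices, the product theorem fails.) -/
open Matrix

theorem stmt_10 :
    ∃ X : Matrix (Fin 4) (Fin 4) ℝ, X.PosSemidef ∧
      X 0 0 + X 1 1 + X 2 2 + X 3 3 = 1 ∧
      0 ≤ X 0 3 ∧ 0 ≤ X 1 2 ∧ 0 ≤ X 2 1 ∧ 0 ≤ X 3 0 ∧
      0 < X 0 3 + X 1 2 + X 2 1 + X 3 0 := by
  set v : Fin 4 → ℝ := fun i => if i = 0 ∨ i = 3 then 1 else 0 with hv
  refine ⟨Matrix.of fun i j => (1/2 : ℝ) * v i * v j, ?_, ?_, ?_, ?_, ?_, ?_, ?_⟩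
  · refine Matrix.PosSemidef.of_dotProduct_mulVec_nonneg ?_ ?_
    · ext i j
      simp [Matrix.conjTranspose, hv]
      split_ifs <;> norm_num
    · intro x
      have key : (Star.star x) ⬝ᵥ ((Matrix.of fun i j => (1/2 : ℝ) * v i * v j) *ᵥ x)
          = (1/2) * (x 0 + x 3)^2 := by
        simp [dotProduct, mulVec, Fin.sum_univ_four, hv]
        ring
      rw [key]
      positivity
  all_goals norm_num [hv, show ((1:Fin 4) ≠ 3) by decide, show ((2:Fin 4) ≠ 0) by decide,
    show ((2:Fin 4) ≠ 3) by decide]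
end
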